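/- Let d ≥ 1 and α > 1, and let ν be a Borel measure on ℝ^d such that ν(A) ≥ ∫_A |log₂ |z||^{2α} / |z|^d dz for every Borel set A contained in the unit ball B_1(0) = {z : |z| < 1}. Let g : ℝ^d → ℝ be bounded Borel measurable and suppose M := sup_{x ∈ ℝ^d} ∫_{ℝ^d} |g(x + z) − g(x)|² ν(dz) < ∞. Then there exist r₀ ∈ (0, 1/4) and a constant C > 0, both depending only on d and α, such that for every x ∈ ℝ^d and every 0 < r < r₀, ∫_{B_r(x)} |g(y) − ḡ_{x,r}|² dy ≤ C M r^d / |log₂ r|^{2α}, where ḡ_{x,r} := (1/|B_r(x)|) ∫_{B_r(x)} g(y) dy. -/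

import Mathlib

open MeasureTheory

/-- The average of `g` over the open ball `B_r(x)` (w.r.t. Lebesgue measure). -/
noncomputable def ballAvg {d : ℕ} (g : EuclideanSpace ℝ (Fin d) → ℝ)
    (x : EuclideanSpace ℝ (Fin d)) (r : ℝ) : ℝ :=
  (volume (Metric.ball x r)).toReal⁻¹ * ∫ y in Metric.ball x r, g y

/-- Variance over a ball is controlled by a uniform bound on the averaged squared increments. -/
lemma variance_ball_le {d : ℕ} (g : EuclideanSpace ℝ (Fin d) → ℝ) (hg : Measurable g)
    (B₀ : ℝ) (hB₀ : ∀ x, |g x| ≤ B₀) (x : EuclideanSpace ℝ (Fin d)) {r : ℝ} (hr : 0 < r)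
    (K : ℝ)
    (hkey : ∀ y ∈ Metric.ball x r, ∫ y' in Metric.ball x r, (g y' - g y) ^ 2 ≤ K) :
    ∫ y in Metric.ball x r, (g y - ballAvg g x r) ^ 2 ≤ K / 2 := by
  set B := Metric.ball x r with hB
  have hVne : volume B ≠ ⊤ := measure_ball_lt_top.ne
  have hV0 : (0 : ℝ) < (volume B).toReal :=
    ENNReal.toReal_pos (Metric.measure_ball_pos volume x hr).ne' hVne
  set V := (volume B).toReal with hV
  have hgint : IntegrableOn g B volume :=
    Measure.integrableOn_of_bounded hVne hg.aestronglyMeasurable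
      (ae_of_all _ fun z => by simpa [Real.norm_eq_abs] using hB₀ z)
  have hg2int : IntegrableOn (fun z => g z ^ 2) B volume :=
    Measure.integrableOn_of_bounded (M := B₀ ^ 2) hVne (hg.pow_const 2).aestronglyMeasurable
      (ae_of_all _ fun z => by
        rw [Real.norm_eq_abs, abs_pow]
        exact pow_le_pow_left₀ (abs_nonneg _) (hB₀ z) 2)
  have hconst : ∀ c : ℝ, IntegrableOn (fun _ => c) B volume := fun c =>
    integrableOn_const measure_ball_lt_top.ne
  set S1 := ∫ y in B, g y with hS1
  set S2 := ∫ y in B, g y ^ 2 with hS2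
  have hc : ballAvg g x r = V⁻¹ * S1 := rfl
  -- inner expansion
  have hinner : ∀ y, ∫ y' in B, (g y' - g y) ^ 2 = S2 - 2 * S1 * g y + V * g y ^ 2 := by
    intro y
    have e1 : ∀ y', (g y' - g y) ^ 2 = (g y' ^ 2 - 2 * g y * g y') + g y ^ 2 := fun y' => by ring
    have h1 : IntegrableOn (fun y' => g y' ^ 2 - 2 * g y * g y') B volume :=
      hg2int.sub (hgint.const_mul _)
    simp_rw [e1]
    rw [integral_add h1 (hconst _), integral_sub hg2int (hgint.const_mul _),
      integral_const_mul _, setIntegral_const, smul_eq_mul, measureReal_def, ← hV]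
    ring
  -- left-hand side expansion
  have hA : ∫ y in B, (g y - ballAvg g x r) ^ 2
      = S2 - 2 * (V⁻¹ * S1) * S1 + V * (V⁻¹ * S1) ^ 2 := by
    rw [hc]
    have e1 : ∀ y, (g y - V⁻¹ * S1) ^ 2
        = (g y ^ 2 - (2 * (V⁻¹ * S1)) * g y) + (V⁻¹ * S1) ^ 2 := fun y => by ring
    have h1 : IntegrableOn (fun y => g y ^ 2 - 2 * (V⁻¹ * S1) * g y) B volume :=
      hg2int.sub (hgint.const_mul _)
    simp_rw [e1]
    rw [integral_add h1 (hconst _), integral_sub hg2int (hgint.const_mul _),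
      integral_const_mul _, setIntegral_const, smul_eq_mul, measureReal_def, ← hV]
  -- outer integral of the inner expansion
  have hIint : IntegrableOn (fun y => S2 - 2 * S1 * g y + V * g y ^ 2) B volume :=
    ((hconst S2).sub (hgint.const_mul _)).add (hg2int.const_mul V)
  have houter : ∫ y in B, (S2 - 2 * S1 * g y + V * g y ^ 2) = 2 * (V * S2 - S1 ^ 2) := by
    have h1 : IntegrableOn (fun y => S2 - 2 * S1 * g y) B volume :=
      (hconst S2).sub (hgint.const_mul _)
    have h2 : IntegrableOn (fun y => V * g y ^ 2) B volume := hg2int.const_mul V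
    rw [integral_add h1 h2, integral_sub (hconst S2) (hgint.const_mul _),
      integral_const_mul _, integral_const_mul _, setIntegral_const, smul_eq_mul, measureReal_def, ← hV]
    ring
  have hmono : ∫ y in B, (S2 - 2 * S1 * g y + V * g y ^ 2) ≤ ∫ y in B, K := by
    refine setIntegral_mono_on hIint (hconst K) measurableSet_ball fun y hy => ?_
    rw [← hinner y]; exact hkey y hy
  have hKint : ∫ y in B, (K : ℝ) = V * K := by rw [setIntegral_const, smul_eq_mul, measureReal_def, ← hV]
  have h2 : 2 * (V * S2 - S1 ^ 2) ≤ V * K := by rw [← houter, ← hKint]; exact hmono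
  rw [hA]
  have hne : V ≠ 0 := ne_of_gt hV0
  have e : S2 - 2 * (V⁻¹ * S1) * S1 + V * (V⁻¹ * S1) ^ 2 = (2 * (V * S2 - S1 ^ 2)) / (2 * V) := by
    field_simp; ring
  have e2 : K / 2 = (V * K) / (2 * V) := by field_simp
  rw [e, e2]
  exact (div_le_div_iff_of_pos_right (by linarith)).2 h2

theorem nonlocal_energy_implies_log_campanato
    (d : ℕ) (hd : 1 ≤ d) (α : ℝ) (hα : 1 < α) :
    ∃ r₀ : ℝ, 0 < r₀ ∧ r₀ < 1 / 4 ∧ ∃ C > (0 : ℝ),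
      ∀ (ν : Measure (EuclideanSpace ℝ (Fin d))),
        (∀ A : Set (EuclideanSpace ℝ (Fin d)), MeasurableSet A →
          A ⊆ Metric.ball 0 1 →
          ∫⁻ z in A, ENNReal.ofReal (|Real.logb 2 ‖z‖| ^ (2 * α) / ‖z‖ ^ d) ≤ ν A) →
      ∀ (g : EuclideanSpace ℝ (Fin d) → ℝ), Measurable g → (∃ B, ∀ x, |g x| ≤ B) →
      ∀ M : ℝ, 0 ≤ M →
        (∀ x, ∫⁻ z, ENNReal.ofReal ((g (x + z) - g x) ^ 2) ∂ν ≤ ENNReal.ofReal M) →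
        ∀ x, ∀ r : ℝ, 0 < r → r < r₀ →
          ∫ y in Metric.ball x r, (g y - ballAvg g x r) ^ 2 ≤
            C * M * r ^ d / |Real.logb 2 r| ^ (2 * α) := by
  refine ⟨1/8, by norm_num, by norm_num, 2^d * (2:ℝ)^(2*α), by positivity, ?_⟩
  intro ν hν g hg hgb M hM0 hen x r hr hr'
  obtain ⟨B₀, hB₀⟩ := hgb
  -- logarithm facts
  have h18 : Real.logb 2 (1/8 : ℝ) = -3 := by
    rw [show (1/8:ℝ) = (2:ℝ) ^ (-3:ℝ) by
      rw [show (-3:ℝ) = ((-3:ℤ):ℝ) by norm_num, Real.rpow_intCast]; norm_num]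
    exact Real.logb_rpow (by norm_num) (by norm_num)
  have ht3 : Real.logb 2 r < -3 := by
    calc Real.logb 2 r < Real.logb 2 (1/8) := Real.logb_lt_logb (by norm_num) hr hr'
      _ = -3 := h18
  set t := Real.logb 2 r with htdef
  have h2rpos : (0:ℝ) < 2*r := by linarith
  have hlog2r : Real.logb 2 (2*r) = 1 + t := by
    rw [Real.logb_mul (by norm_num) hr.ne', Real.logb_self_eq_one (by norm_num)]
  have habs2r : |Real.logb 2 (2*r)| = -(1+t) := by
    rw [hlog2r]; exact abs_of_neg (by linarith)
  have habst : |t| = -t := abs_of_neg (by linarith)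
  set L := |Real.logb 2 (2*r)| ^ (2*α) with hLdef
  have hLp : 0 < L := Real.rpow_pos_of_pos (by rw [habs2r]; linarith) _
  have h2α : (0:ℝ) ≤ 2*α := by linarith
  -- the weight density
  set w' : EuclideanSpace ℝ (Fin d) → ENNReal :=
    fun z => ENNReal.ofReal (|Real.logb 2 ‖z‖| ^ (2 * α) / ‖z‖ ^ d) with hw'def
  have hw'm : Measurable w' := by
    apply Measurable.ennreal_ofReal
    have h : Measurable fun z : EuclideanSpace ℝ (Fin d) => Real.logb 2 ‖z‖ := by
      simpa [Real.logb, div_eq_mul_inv] using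
        (Real.measurable_log.comp measurable_norm).mul_const _
    exact ((Real.continuous_rpow_const h2α).measurable.comp h.abs).div
      (measurable_norm.pow_const d)
  have hle : (volume.withDensity w').restrict (Metric.ball 0 1) ≤ ν := by
    refine Measure.le_iff.2 fun s hs => ?_
    rw [Measure.restrict_apply hs, withDensity_apply _ (hs.inter measurableSet_ball)]
    exact le_trans (hν _ (hs.inter measurableSet_ball) Set.inter_subset_right)
      (measure_mono Set.inter_subset_left)
  -- the key bound on averaged squared increments
  have key : ∀ y ∈ Metric.ball x r,
      ∫ y' in Metric.ball x r, (g y' - g y) ^ 2 ≤ (2*r)^d / L * M := by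
    intro y hy
    have hFm : Measurable fun z => (g (y + z) - g y) ^ 2 :=
      ((hg.comp (measurable_const_add y)).sub measurable_const).pow_const 2
    have hFm' : Measurable fun z => ENNReal.ofReal ((g (y + z) - g y) ^ 2) :=
      hFm.ennreal_ofReal
    -- enlarge the domain and recenter
    have hsub : Metric.ball x r ⊆ Metric.ball y (2*r) := by
      intro u hu
      rw [Metric.mem_ball] at *
      calc dist u y ≤ dist u x + dist x y := dist_triangle _ _ _
        _ < r + r := by rw [dist_comm x y]; exact add_lt_add hu hy
        _ = 2*r := by ring
    have hint2 : IntegrableOn (fun y' => (g y' - g y) ^ 2) (Metric.ball y (2*r)) volume :=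
      Measure.integrableOn_of_bounded (M := (B₀ + |g y|) ^ 2) measure_ball_lt_top.ne
        ((hg.sub measurable_const).pow_const 2).aestronglyMeasurable
        (ae_of_all _ fun z => by
          rw [Real.norm_eq_abs, abs_pow]
          have h1 : |g z - g y| ≤ |g z| + |g y| := by
            simpa [sub_eq_add_neg] using abs_add_le (g z) (-(g y))
          exact pow_le_pow_left₀ (abs_nonneg _)
            (h1.trans (add_le_add (hB₀ z) le_rfl)) 2)
    have step_a : ∫ y' in Metric.ball x r, (g y' - g y) ^ 2
        ≤ ∫ y' in Metric.ball y (2*r), (g y' - g y) ^ 2 :=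
      setIntegral_mono_set hint2 (ae_of_all _ fun z => sq_nonneg _)
        (HasSubset.Subset.eventuallyLE hsub)
    have hpre : (fun z => y + z) ⁻¹' Metric.ball y (2*r)
        = Metric.ball (0 : EuclideanSpace ℝ (Fin d)) (2*r) := by
      ext z; simp [Metric.mem_ball, dist_eq_norm]
    have step_b : ∫ y' in Metric.ball y (2*r), (g y' - g y) ^ 2
        = ∫ z in Metric.ball (0 : EuclideanSpace ℝ (Fin d)) (2*r), (g (y + z) - g y) ^ 2 := by
      rw [← hpre]
      exact ((measurePreserving_add_left volume y).setIntegral_preimage_emb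
        (MeasurableEquiv.addLeft y).measurableEmbedding (fun y' => (g y' - g y) ^ 2) _).symm
    -- pointwise comparison with the weight
    have hptwise : ∀ z ∈ Metric.ball (0 : EuclideanSpace ℝ (Fin d)) (2*r),
        ENNReal.ofReal ((g (y + z) - g y) ^ 2)
          ≤ ENNReal.ofReal ((2*r)^d / L) * (w' z * ENNReal.ofReal ((g (y + z) - g y) ^ 2)) := by
      intro z hz
      rcases eq_or_ne z 0 with rfl | hz0
      · simp
      · have hzn : 0 < ‖z‖ := norm_pos_iff.2 hz0
        have hz2r : ‖z‖ < 2*r := by rwa [Metric.mem_ball, dist_zero_right] at hz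
        have hlogz : Real.logb 2 ‖z‖ < Real.logb 2 (2*r) :=
          Real.logb_lt_logb (by norm_num) hzn hz2r
        have hlogz' : Real.logb 2 ‖z‖ < 1 + t := by rwa [hlog2r] at hlogz
        have habsz : |Real.logb 2 (2*r)| ≤ |Real.logb 2 ‖z‖| := by
          rw [habs2r, abs_of_neg (by linarith)]; linarith
        have hnum : L ≤ |Real.logb 2 ‖z‖| ^ (2*α) :=
          Real.rpow_le_rpow (abs_nonneg _) habsz h2α
        have hden : ‖z‖^d ≤ (2*r)^d := pow_le_pow_left₀ (norm_nonneg _) hz2r.le d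
        have hdpos : 0 < ‖z‖^d := pow_pos hzn d
        have hwge : L / (2*r)^d ≤ |Real.logb 2 ‖z‖| ^ (2*α) / ‖z‖^d :=
          div_le_div₀ (Real.rpow_nonneg (abs_nonneg _) _) hnum hdpos hden
        have hone : (1:ENNReal) ≤ ENNReal.ofReal ((2*r)^d / L) * w' z := by
          rw [← ENNReal.ofReal_mul (div_nonneg (by positivity) hLp.le), ← ENNReal.ofReal_one]
          apply ENNReal.ofReal_le_ofReal
          have hid : (2*r)^d / L * (L / (2*r)^d) = 1 := by
            field_simp
          calc (1:ℝ) = (2*r)^d / L * (L / (2*r)^d) := hid.symm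
            _ ≤ (2*r)^d / L * (|Real.logb 2 ‖z‖| ^ (2*α) / ‖z‖^d) :=
              mul_le_mul_of_nonneg_left hwge (div_nonneg (by positivity) hLp.le)
        calc ENNReal.ofReal ((g (y + z) - g y) ^ 2)
            = 1 * ENNReal.ofReal ((g (y + z) - g y) ^ 2) := (one_mul _).symm
          _ ≤ (ENNReal.ofReal ((2*r)^d / L) * w' z) * ENNReal.ofReal ((g (y + z) - g y) ^ 2) :=
              mul_le_mul_left hone _
          _ = ENNReal.ofReal ((2*r)^d / L)
              * (w' z * ENNReal.ofReal ((g (y + z) - g y) ^ 2)) := by rw [mul_assoc]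
    -- the nonlocal energy bound
    have hKc : ∫⁻ z in Metric.ball (0 : EuclideanSpace ℝ (Fin d)) (2*r),
        ENNReal.ofReal ((g (y + z) - g y) ^ 2) ≤ ENNReal.ofReal ((2*r)^d / L * M) := by
      have step1 : ∫⁻ z in Metric.ball (0 : EuclideanSpace ℝ (Fin d)) (2*r),
          ENNReal.ofReal ((g (y + z) - g y) ^ 2)
          ≤ ENNReal.ofReal ((2*r)^d / L) *
            ∫⁻ z in Metric.ball (0 : EuclideanSpace ℝ (Fin d)) (2*r),
              w' z * ENNReal.ofReal ((g (y + z) - g y) ^ 2) := by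
        rw [← lintegral_const_mul _ (f := fun z => w' z * ENNReal.ofReal ((g (y + z) - g y) ^ 2)) (hw'm.mul hFm')]
        exact setLIntegral_mono (measurable_const.mul (hw'm.mul hFm')) hptwise
      have step2 : ∫⁻ z in Metric.ball (0 : EuclideanSpace ℝ (Fin d)) (2*r),
          w' z * ENNReal.ofReal ((g (y + z) - g y) ^ 2)
          = ∫⁻ z in Metric.ball (0 : EuclideanSpace ℝ (Fin d)) (2*r),
            ENNReal.ofReal ((g (y + z) - g y) ^ 2) ∂(volume.withDensity w') := by
        rw [restrict_withDensity measurableSet_ball,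
          lintegral_withDensity_eq_lintegral_mul _ hw'm hFm']
        rfl
      have step3 : ∫⁻ z in Metric.ball (0 : EuclideanSpace ℝ (Fin d)) (2*r),
            ENNReal.ofReal ((g (y + z) - g y) ^ 2) ∂(volume.withDensity w')
          ≤ ENNReal.ofReal M := by
        calc ∫⁻ z in Metric.ball (0 : EuclideanSpace ℝ (Fin d)) (2*r),
              ENNReal.ofReal ((g (y + z) - g y) ^ 2) ∂(volume.withDensity w')
            ≤ ∫⁻ z in Metric.ball (0 : EuclideanSpace ℝ (Fin d)) 1,
              ENNReal.ofReal ((g (y + z) - g y) ^ 2) ∂(volume.withDensity w') :=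
            lintegral_mono' (Measure.restrict_mono
              (Metric.ball_subset_ball (by linarith)) le_rfl) le_rfl
          _ ≤ ∫⁻ z, ENNReal.ofReal ((g (y + z) - g y) ^ 2) ∂ν :=
            lintegral_mono' hle le_rfl
          _ ≤ ENNReal.ofReal M := hen y
      calc ∫⁻ z in Metric.ball (0 : EuclideanSpace ℝ (Fin d)) (2*r),
            ENNReal.ofReal ((g (y + z) - g y) ^ 2)
          ≤ ENNReal.ofReal ((2*r)^d / L) *
            ∫⁻ z in Metric.ball (0 : EuclideanSpace ℝ (Fin d)) (2*r),
              w' z * ENNReal.ofReal ((g (y + z) - g y) ^ 2) := step1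
        _ = ENNReal.ofReal ((2*r)^d / L) *
            ∫⁻ z in Metric.ball (0 : EuclideanSpace ℝ (Fin d)) (2*r),
              ENNReal.ofReal ((g (y + z) - g y) ^ 2) ∂(volume.withDensity w') := by rw [step2]
        _ ≤ ENNReal.ofReal ((2*r)^d / L) * ENNReal.ofReal M := mul_le_mul_right step3 _
        _ = ENNReal.ofReal ((2*r)^d / L * M) :=
            (ENNReal.ofReal_mul (div_nonneg (by positivity) hLp.le)).symm
    have hreal : ∫ z in Metric.ball (0 : EuclideanSpace ℝ (Fin d)) (2*r), (g (y + z) - g y) ^ 2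
        ≤ (2*r)^d / L * M := by
      rw [integral_eq_lintegral_of_nonneg_ae (ae_of_all _ fun z => sq_nonneg _)
        hFm.aestronglyMeasurable]
      exact ENNReal.toReal_le_of_le_ofReal
        (mul_nonneg (div_nonneg (by positivity) hLp.le) hM0) hKc
    calc ∫ y' in Metric.ball x r, (g y' - g y) ^ 2
        ≤ ∫ y' in Metric.ball y (2*r), (g y' - g y) ^ 2 := step_a
      _ = ∫ z in Metric.ball (0 : EuclideanSpace ℝ (Fin d)) (2*r), (g (y + z) - g y) ^ 2 := step_b
      _ ≤ (2*r)^d / L * M := hreal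
  -- put everything together
  have hvar := variance_ball_le g hg B₀ hB₀ x hr ((2*r)^d / L * M) key
  have hK0 : 0 ≤ (2*r)^d / L * M := mul_nonneg (div_nonneg (by positivity) hLp.le) hM0
  have htpos : 0 < |t| ^ (2*α) := Real.rpow_pos_of_pos (by rw [habst]; linarith) _
  have hL0 : |t| ^ (2*α) / (2:ℝ)^(2*α) ≤ L := by
    have h1 : |t|/2 ≤ |Real.logb 2 (2*r)| := by rw [habs2r, habst]; linarith
    calc |t|^(2*α) / (2:ℝ)^(2*α) = (|t|/2)^(2*α) :=
        (Real.div_rpow (abs_nonneg _) (by norm_num : (0:ℝ) ≤ 2) _).symm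
      _ ≤ L := Real.rpow_le_rpow (by positivity) h1 h2α
  have hfin : (2*r)^d / L * M ≤ 2^d * (2:ℝ)^(2*α) * M * r^d / |t|^(2*α) := by
    have h2d : (2*r)^d = 2^d * r^d := mul_pow 2 r d
    have hstep : (2*r)^d / L * M ≤ (2*r)^d / (|t|^(2*α) / (2:ℝ)^(2*α)) * M :=
      mul_le_mul_of_nonneg_right
        (div_le_div_of_nonneg_left (by positivity) (div_pos htpos (by positivity)) hL0) hM0
    have heq : (2*r)^d / (|t|^(2*α) / (2:ℝ)^(2*α)) * M
        = 2^d * (2:ℝ)^(2*α) * M * r^d / |t|^(2*α) := by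
      rw [h2d]; field_simp
    rw [← heq]; exact hstep
  calc ∫ y in Metric.ball x r, (g y - ballAvg g x r) ^ 2
      ≤ ((2*r)^d / L * M) / 2 := hvar
    _ ≤ (2*r)^d / L * M := by linarith
    _ ≤ 2^d * (2:ℝ)^(2*α) * M * r^d / |t|^(2*α) := hfin
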